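/- Let (a,b) be a matching pair in L^∞(ℝ) with subordinated pair (c,d). Then the following operator identity holds on L²(ℝ⁺): (W(a) + H(b)) ∘ (I − H(c̃)) = (W(b) + H(a)) ∘ W(c). -/

import Mathlib

open MeasureTheory Complex Filter Set

noncomputable section

namespace WienerHopf

/-- The space `L²(ℝ;ℂ)`. -/
abbrev L2 : Type := Lp ℂ 2 (volume : Measure ℝ)

open Classical in
/-- Multiplication by a function `a : ℝ → ℂ`, as a bounded operator on `L²(ℝ)`.
(It is defined to be `0` in the degenerate case where `a` is not essentially bounded.) -/
def mul (a : ℝ → ℂ) : L2 →L[ℂ] L2 :=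
  if h : MemLp a ⊤ (volume : Measure ℝ) then
    LinearMap.mkContinuous
      { toFun := fun f => ((Lp.memLp f).smul (r := 2) h).toLp (a • (f : ℝ → ℂ))
        map_add' := by
          intro f g
          rw [← MemLp.toLp_add]
          apply Lp.ext
          filter_upwards [MemLp.coeFn_toLp ((Lp.memLp (f + g)).smul (r := 2) h),
            MemLp.coeFn_toLp (((Lp.memLp f).smul (r := 2) h).add
              ((Lp.memLp g).smul (r := 2) h)),
            Lp.coeFn_add f g] with t h1 h2 h3
          rw [h1, h2]
          simp only [Pi.smul_apply, smul_eq_mul, Pi.mul_apply, Pi.add_apply]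
          rw [h3]
          simp [Pi.add_apply, mul_add]
        map_smul' := by
          intro m f
          simp only [RingHom.id_apply]
          rw [← MemLp.toLp_const_smul]
          apply Lp.ext
          filter_upwards [MemLp.coeFn_toLp ((Lp.memLp (m • f)).smul (r := 2) h),
            MemLp.coeFn_toLp (((Lp.memLp f).smul (r := 2) h).const_smul m),
            Lp.coeFn_smul m f] with t h1 h2 h3
          rw [h1, h2]
          simp only [Pi.smul_apply, smul_eq_mul, Pi.mul_apply]
          rw [h3]
          simp only [Pi.smul_apply, smul_eq_mul]
          ring
        }
      (eLpNorm a ⊤ (volume : Measure ℝ)).toReal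
      (by
        intro f
        simp only [LinearMap.coe_mk, AddHom.coe_mk]
        rw [Lp.norm_toLp, Lp.norm_def]
        have hle := eLpNorm_smul_le_mul_eLpNorm (Lp.aestronglyMeasurable f) h.1
          (p := ⊤) (q := 2) (r := 2)
        calc (eLpNorm (a • (f : ℝ → ℂ)) 2 (volume : Measure ℝ)).toReal
            ≤ (eLpNorm a ⊤ (volume : Measure ℝ) * eLpNorm (f : ℝ → ℂ) 2 volume).toReal := by
              apply ENNReal.toReal_mono _ hle
              exact ENNReal.mul_ne_top h.2.ne (Lp.eLpNorm_lt_top f).ne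
          _ = (eLpNorm a ⊤ (volume : Measure ℝ)).toReal *
              (eLpNorm (f : ℝ → ℂ) 2 (volume : Measure ℝ)).toReal := ENNReal.toReal_mul)
  else 0

theorem mul_coeFn {a : ℝ → ℂ} (h : MemLp a ⊤ (volume : Measure ℝ)) (f : L2) :
    (mul a f : ℝ → ℂ) =ᵐ[volume] fun t => a t * f t := by
  rw [mul, dif_pos h]
  show ⇑(((Lp.memLp f).smul (r := 2) h).toLp (a • (f : ℝ → ℂ))) =ᵐ[volume]
    fun t => a t * f t
  exact (MemLp.coeFn_toLp _).trans
    (Eventually.of_forall fun t => by simp [Pi.smul_apply])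

/-- `(-t)`-reflection is measure preserving. -/
theorem negMP : MeasurePreserving (fun t : ℝ => -t) volume volume :=
  Measure.measurePreserving_neg (volume : Measure ℝ)

/-- The reflection operator `(Jφ)(t) = φ(-t)` on `L²(ℝ)`. -/
def reflect : L2 →L[ℂ] L2 :=
  LinearMap.mkContinuous
    { toFun := ⇑(Lp.compMeasurePreserving (fun t : ℝ => -t) negMP)
      map_add' := fun f g => map_add _ f g
      map_smul' := by
        intro m g
        simp only [RingHom.id_apply]
        apply Lp.ext
        filter_upwards [Lp.coeFn_compMeasurePreserving (f := fun t : ℝ => -t) (m • g) negMP,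
          Lp.coeFn_smul m (Lp.compMeasurePreserving (fun t : ℝ => -t) negMP g),
          Lp.coeFn_compMeasurePreserving (f := fun t : ℝ => -t) g negMP,
          negMP.quasiMeasurePreserving.ae_eq_comp (Lp.coeFn_smul m g)] with t h1 h2 h3 h4
        rw [h1, h2, h4]
        simp only [Function.comp_apply, Pi.smul_apply, smul_eq_mul]
        rw [h3]
        simp only [Function.comp_apply]
      }
    1
    (by
      intro g
      rw [one_mul]
      exact le_of_eq (Lp.norm_compMeasurePreserving g _))

theorem reflect_coeFn (g : L2) :
    (reflect g : ℝ → ℂ) =ᵐ[volume] fun t => g (-t) :=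
  Lp.coeFn_compMeasurePreserving (f := fun t : ℝ => -t) g negMP

/-- The indicator function of `(0,∞)`. -/
def chiPlus : ℝ → ℂ := Set.indicator (Set.Ioi (0 : ℝ)) (fun _ => 1)

theorem chiPlus_memℒp : MemLp chiPlus ⊤ (volume : Measure ℝ) :=
  (memLp_top_const (1 : ℂ)).indicator measurableSet_Ioi

/-- The subspace of `L²(ℝ)` consisting of functions vanishing a.e. on `(-∞,0)`;
it is identified with `L²(ℝ⁺)`. -/
def posSubspace : Submodule ℂ L2 where
  carrier := {f : L2 | ∀ᵐ t : ℝ ∂volume, t < 0 → (f : ℝ → ℂ) t = 0}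
  zero_mem' := by
    filter_upwards [Lp.coeFn_zero ℂ 2 (volume : Measure ℝ)] with t ht _
    simp [ht]
  add_mem' := by
    intro f g hf hg
    filter_upwards [hf, hg, Lp.coeFn_add f g] with t h1 h2 h3 hlt
    rw [h3]
    simp [Pi.add_apply, h1 hlt, h2 hlt]
  smul_mem' := by
    intro m f hf
    filter_upwards [hf, Lp.coeFn_smul m f] with t h1 h2 hlt
    rw [h2]
    simp [Pi.smul_apply, h1 hlt]

/-- `L²(ℝ⁺)`, realized as the subspace of `L²(ℝ)` of functions vanishing a.e. on `(-∞,0)`. -/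
abbrev Lp2Plus : Type := ↥posSubspace

theorem chiPlus_mul_mem (g : L2) : mul chiPlus g ∈ posSubspace := by
  filter_upwards [mul_coeFn chiPlus_memℒp g] with t ht hlt
  rw [ht, chiPlus, Set.indicator_of_notMem (by simpa using hlt.le), zero_mul]

/-- Compression of an operator on `L²(ℝ)` to the subspace `L²(ℝ⁺)`:
`φ ↦ χ₊ ⬝ (T φ)`. -/
def compress (T : L2 →L[ℂ] L2) : Lp2Plus →L[ℂ] Lp2Plus :=
  LinearMap.mkContinuous
    { toFun := fun φ => ⟨mul chiPlus (T φ.val), chiPlus_mul_mem _⟩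
      map_add' := by intro φ ψ; apply Subtype.ext; simp
      map_smul' := by intro m φ; apply Subtype.ext; simp }
    ‖(mul chiPlus).comp T‖
    (by intro φ; exact ((mul chiPlus).comp T).le_opNorm φ.val)

theorem compress_coe (T : L2 →L[ℂ] L2) (φ : Lp2Plus) :
    (compress T φ : L2) = mul chiPlus (T φ.val) := rfl

/-- An abstract realization of the Fourier transform
`(𝓕φ)(ξ) = ∫ e^{iξx} φ(x) dx` on `L²(ℝ)` (together with its inverse
`(𝓕⁻¹ψ)(x) = (2π)⁻¹ ∫ e^{-iξx} ψ(ξ) dξ`): a continuous linear bijection of `L²(ℝ)`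
that is given by the above integral formulas on integrable functions.  By density
of `L¹ ∩ L²` in `L²`, these properties determine the operator uniquely, and by the
Fourier–Plancherel theory such an operator exists. -/
structure FourierL2 where
  equiv : L2 ≃L[ℂ] L2
  forward : ∀ φ : L2, Integrable (φ : ℝ → ℂ) volume →
      (equiv φ : ℝ → ℂ) =ᵐ[volume]
        fun ξ : ℝ => ∫ x : ℝ, Complex.exp (Complex.I * ξ * x) * φ x
  inverse : ∀ ψ : L2, Integrable (ψ : ℝ → ℂ) volume →
      (equiv.symm ψ : ℝ → ℂ) =ᵐ[volume]
        fun x : ℝ => (2 * Real.pi : ℂ)⁻¹ * ∫ ξ : ℝ, Complex.exp (-(Complex.I * ξ * x)) * ψ ξ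

/-- `W⁰(a) = 𝓕⁻¹ M_a 𝓕`, the convolution (Fourier multiplier) operator on `L²(ℝ)`. -/
def W0 (F : FourierL2) (a : ℝ → ℂ) : L2 →L[ℂ] L2 :=
  (F.equiv.symm : L2 →L[ℂ] L2).comp ((mul a).comp (F.equiv : L2 →L[ℂ] L2))

/-- The Wiener–Hopf operator `W(a) = χ₊ W⁰(a)` on `L²(ℝ⁺)`. -/
def W (F : FourierL2) (a : ℝ → ℂ) : Lp2Plus →L[ℂ] Lp2Plus :=
  compress (W0 F a)

/-- The Hankel operator `H(b) = χ₊ W⁰(b) J` on `L²(ℝ⁺)`. -/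
def H (F : FourierL2) (b : ℝ → ℂ) : Lp2Plus →L[ℂ] Lp2Plus :=
  compress ((W0 F b).comp reflect)

/-- `a` is invertible in the Banach algebra `L^∞(ℝ)`: `a ∈ L^∞`, `a ≠ 0` a.e.,
and the pointwise inverse `a⁻¹` again belongs to `L^∞`. -/
def InvertibleLinf (a : ℝ → ℂ) : Prop :=
  MemLp a ⊤ (volume : Measure ℝ) ∧ (∀ᵐ t : ℝ ∂volume, a t ≠ 0) ∧
    MemLp (fun t => (a t)⁻¹) ⊤ (volume : Measure ℝ)

/-- `(a,b)` is a matching pair: `a, b` are invertible in `L^∞(ℝ)` and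
`a(t)a(-t) = b(t)b(-t)` for a.e. `t`. -/
def MatchingPair (a b : ℝ → ℂ) : Prop :=
  InvertibleLinf a ∧ InvertibleLinf b ∧
    ∀ᵐ t : ℝ ∂volume, a t * a (-t) = b t * b (-t)


/-! ### Auxiliary lemmas -/

theorem memℒp_top_neg {g : ℝ → ℂ} (h : MemLp g ⊤ (volume : Measure ℝ)) :
    MemLp (fun t => g (-t)) ⊤ (volume : Measure ℝ) :=
  h.comp_measurePreserving negMP

theorem memℒp_top_mul {u v : ℝ → ℂ} (hu : MemLp u ⊤ (volume : Measure ℝ))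
    (hv : MemLp v ⊤ (volume : Measure ℝ)) :
    MemLp (fun t => u t * v t) ⊤ (volume : Measure ℝ) :=
  hv.smul (r := ⊤) hu

theorem mul_congr_symbol {a a' : ℝ → ℂ} (h : MemLp a ⊤ (volume : Measure ℝ))
    (hae : a =ᵐ[volume] a') : mul a = mul a' := by
  have h' : MemLp a' ⊤ (volume : Measure ℝ) := h.ae_eq hae
  ext f
  filter_upwards [mul_coeFn h f, mul_coeFn h' f, hae] with t h1 h2 h3
  rw [h1, h2, h3]

theorem mul_mul_apply {a b : ℝ → ℂ} (ha : MemLp a ⊤ (volume : Measure ℝ))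
    (hb : MemLp b ⊤ (volume : Measure ℝ)) (f : L2) :
    mul a (mul b f) = mul (fun t => a t * b t) f := by
  apply Lp.ext
  filter_upwards [mul_coeFn ha (mul b f), mul_coeFn hb f,
    mul_coeFn (memℒp_top_mul ha hb) f] with t h1 h2 h3
  rw [h1, h2, h3, mul_assoc]

theorem reflect_reflect_apply (f : L2) : reflect (reflect f) = f := by
  apply Lp.ext
  filter_upwards [reflect_coeFn (reflect f),
    negMP.quasiMeasurePreserving.ae_eq_comp (reflect_coeFn f)] with t h1 h2
  simp only [Function.comp_apply] at h2
  rw [h1, h2, neg_neg]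

theorem reflect_mul_apply {g : ℝ → ℂ} (hg : MemLp g ⊤ (volume : Measure ℝ)) (f : L2) :
    reflect (mul g f) = mul (fun t => g (-t)) (reflect f) := by
  apply Lp.ext
  filter_upwards [reflect_coeFn (mul g f),
    negMP.quasiMeasurePreserving.ae_eq_comp (mul_coeFn hg f),
    mul_coeFn (memℒp_top_neg hg) (reflect f), reflect_coeFn f] with t h1 h2 h3 h4
  simp only [Function.comp_apply] at h2
  rw [h1, h2, h3, h4]

theorem integrable_reflect {f : L2} (hf : Integrable (f : ℝ → ℂ) volume) :
    Integrable ((reflect f : L2) : ℝ → ℂ) volume := by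
  have h : Integrable ((f : ℝ → ℂ) ∘ (fun t : ℝ => -t)) volume :=
    (negMP.integrable_comp (Lp.aestronglyMeasurable f)).mpr hf
  exact h.congr (reflect_coeFn f).symm

theorem dense_integrable :
    Dense {f : L2 | Integrable (f : ℝ → ℂ) volume} := by
  refine Dense.mono ?_ (Lp.simpleFunc.dense (E := ℂ) (μ := (volume : Measure ℝ))
    (p := 2) (by norm_num))
  intro f hf
  set s : Lp.simpleFunc ℂ 2 (volume : Measure ℝ) := ⟨f, hf⟩ with hs
  have hmem : MemLp (Lp.simpleFunc.toSimpleFunc s) 2 (volume : Measure ℝ) :=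
    Lp.simpleFunc.memLp s
  have hint : Integrable (Lp.simpleFunc.toSimpleFunc s) volume :=
    (MeasureTheory.SimpleFunc.memLp_iff_integrable (by norm_num) (by norm_num)).mp hmem
  exact hint.congr (Lp.simpleFunc.toSimpleFunc_eq_toFun s)

theorem reflect_fourier_integrable (F : FourierL2) (f : L2)
    (hf : Integrable (f : ℝ → ℂ) volume) :
    reflect (F.equiv f) = F.equiv (reflect f) := by
  have hJf : Integrable ((reflect f : L2) : ℝ → ℂ) volume := integrable_reflect hf
  apply Lp.ext
  filter_upwards [reflect_coeFn (F.equiv f),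
    negMP.quasiMeasurePreserving.ae_eq_comp (F.forward f hf),
    F.forward (reflect f) hJf] with ξ e1 e2 e3
  simp only [Function.comp_apply] at e2
  rw [e1, e2, e3]
  have hR : (∫ x : ℝ, Complex.exp (Complex.I * ξ * x) * (reflect f : ℝ → ℂ) x)
      = ∫ x : ℝ, Complex.exp (Complex.I * ξ * x) * (f : ℝ → ℂ) (-x) := by
    apply integral_congr_ae
    filter_upwards [reflect_coeFn f] with x hx
    rw [hx]
  rw [hR]
  have hS : (∫ x : ℝ, Complex.exp (Complex.I * ξ * x) * (f : ℝ → ℂ) (-x))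
      = ∫ x : ℝ, Complex.exp (Complex.I * (-ξ : ℝ) * x) * (f : ℝ → ℂ) x := by
    rw [← MeasureTheory.integral_neg_eq_self
      (fun x : ℝ => Complex.exp (Complex.I * (-ξ : ℝ) * x) * (f : ℝ → ℂ) x) volume]
    apply integral_congr_ae
    refine Eventually.of_forall fun x => ?_
    push_cast
    ring_nf
  rw [hS]

theorem reflect_fourier (F : FourierL2) (f : L2) :
    reflect (F.equiv f) = F.equiv (reflect f) := by
  have hcoe : (fun g : L2 => reflect (F.equiv g)) = fun g : L2 => F.equiv (reflect g) := by
    apply Continuous.ext_on dense_integrable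
    · exact reflect.continuous.comp F.equiv.continuous
    · exact F.equiv.continuous.comp reflect.continuous
    · intro g hg
      exact reflect_fourier_integrable F g hg
  exact congrFun hcoe f

theorem reflect_fourier_symm (F : FourierL2) (f : L2) :
    reflect (F.equiv.symm f) = F.equiv.symm (reflect f) := by
  rw [eq_comm, ContinuousLinearEquiv.symm_apply_eq, ← reflect_fourier,
    ContinuousLinearEquiv.apply_symm_apply]

theorem W0_apply (F : FourierL2) (g : ℝ → ℂ) (f : L2) :
    W0 F g f = F.equiv.symm (mul g (F.equiv f)) := rfl

theorem reflect_W0 (F : FourierL2) {g : ℝ → ℂ} (hg : MemLp g ⊤ (volume : Measure ℝ))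
    (f : L2) :
    reflect (W0 F g f) = W0 F (fun t => g (-t)) (reflect f) := by
  rw [W0_apply, W0_apply, reflect_fourier_symm, reflect_mul_apply hg, reflect_fourier]

theorem W0_W0 (F : FourierL2) {u v : ℝ → ℂ} (hu : MemLp u ⊤ (volume : Measure ℝ))
    (hv : MemLp v ⊤ (volume : Measure ℝ)) (f : L2) :
    W0 F u (W0 F v f) = W0 F (fun t => u t * v t) f := by
  rw [W0_apply, W0_apply, W0_apply, ContinuousLinearEquiv.apply_symm_apply,
    mul_mul_apply hu hv]

theorem W0_congr (F : FourierL2) {u v : ℝ → ℂ} (hu : MemLp u ⊤ (volume : Measure ℝ))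
    (huv : u =ᵐ[volume] v) (f : L2) : W0 F u f = W0 F v f := by
  rw [W0_apply, W0_apply, mul_congr_symbol hu huv]

/-- The indicator of `(-∞,0)`, as the reflection of `chiPlus`. -/
def chiMinus : ℝ → ℂ := fun t => chiPlus (-t)

theorem chiMinus_memℒp : MemLp chiMinus ⊤ (volume : Measure ℝ) :=
  memℒp_top_neg chiPlus_memℒp

theorem chi_split (y : L2) : mul chiPlus y + mul chiMinus y = y := by
  apply Lp.ext
  have hzero : ∀ᵐ t : ℝ ∂volume, t ≠ 0 := by
    refine ae_iff.mpr ?_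
    simpa using Real.volume_singleton (x := (0 : ℝ))
  filter_upwards [Lp.coeFn_add (mul chiPlus y) (mul chiMinus y),
    mul_coeFn chiPlus_memℒp y, mul_coeFn chiMinus_memℒp y, hzero] with t h1 h2 h3 ht
  rw [h1]
  simp only [Pi.add_apply]
  rw [h2, h3]
  rcases ht.lt_or_gt with hlt | hlt
  · have hp : chiPlus t = 0 := Set.indicator_of_notMem (by simpa using hlt.le) _
    have hm : chiMinus t = 1 := by
      rw [chiMinus]
      exact Set.indicator_of_mem (by simpa using hlt) _
    rw [hp, hm]; ring
  · have hp : chiPlus t = 1 := Set.indicator_of_mem (by simpa using hlt) _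
    have hm : chiMinus t = 0 := by
      rw [chiMinus]
      exact Set.indicator_of_notMem (by simpa using hlt.le) _
    rw [hp, hm]; ring

theorem chiPlus_eq_sub (y : L2) : mul chiPlus y = y - mul chiMinus y := by
  rw [eq_sub_iff_add_eq]
  exact chi_split y

theorem reflect_chiPlus (y : L2) :
    reflect (mul chiPlus y) = mul chiMinus (reflect y) :=
  reflect_mul_apply chiPlus_memℒp y

/-- For a matching pair `(a,b)` with subordinated pair `(c,d)`:
`(W(a) + H(b))(I - H(c̃)) = (W(b) + H(a)) W(c)`. -/
theorem identity_one_minus_Hankel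
    (F : FourierL2) (a b c d : ℝ → ℂ) (hab : MatchingPair a b)
    (hc : c = fun t => a t * (b t)⁻¹) (hd : d = fun t => a t * (b (-t))⁻¹) :
    (W F a + H F b).comp ((1 : Lp2Plus →L[ℂ] Lp2Plus) - H F (fun t => c (-t))) =
      (W F b + H F a).comp (W F c) := by
  obtain ⟨ha, hb, hm⟩ := hab
  have hc_mem : MemLp c ⊤ (volume : Measure ℝ) := by
    rw [hc]; exact memℒp_top_mul ha.1 hb.2.2
  have hct_mem : MemLp (fun t => c (-t)) ⊤ (volume : Measure ℝ) := memℒp_top_neg hc_mem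
  have hbne : ∀ᵐ t : ℝ ∂volume, b t ≠ 0 := hb.2.1
  have hbneg : ∀ᵐ t : ℝ ∂volume, b (-t) ≠ 0 :=
    negMP.quasiMeasurePreserving.tendsto_ae.eventually hbne
  have h_bc : (fun t => b t * c t) =ᵐ[volume] a := by
    filter_upwards [hbne] with t ht
    simp only [hc]
    rw [mul_comm (a t), ← mul_assoc, mul_inv_cancel₀ ht, one_mul]
  have h_ac : (fun t => a t * (fun s => c (-s)) t) =ᵐ[volume] b := by
    filter_upwards [hm, hbneg] with t h1 h2
    simp only [hc]
    rw [← mul_assoc, h1, mul_assoc, mul_inv_cancel₀ h2, mul_one]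
  have key : ∀ x : L2,
      mul chiPlus (W0 F a (x - mul chiPlus (W0 F (fun t => c (-t)) (reflect x))))
        + mul chiPlus (W0 F b (reflect
            (x - mul chiPlus (W0 F (fun t => c (-t)) (reflect x)))))
      = mul chiPlus (W0 F b (mul chiPlus (W0 F c x)))
        + mul chiPlus (W0 F a (reflect (mul chiPlus (W0 F c x)))) := by
    intro x
    have hJy : reflect (W0 F (fun t => c (-t)) (reflect x)) = W0 F c x := by
      rw [reflect_W0 F hct_mem, reflect_reflect_apply]
      exact W0_congr F (memℒp_top_neg hct_mem)
        (Eventually.of_forall fun t => by simp) x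
    have hJz : reflect (W0 F c x) = W0 F (fun t => c (-t)) (reflect x) :=
      reflect_W0 F hc_mem x
    have e1 : W0 F a (W0 F (fun t => c (-t)) (reflect x)) = W0 F b (reflect x) := by
      rw [W0_W0 F ha.1 hct_mem]
      exact W0_congr F (memℒp_top_mul ha.1 hct_mem) h_ac (reflect x)
    have e2 : W0 F b (W0 F c x) = W0 F a x := by
      rw [W0_W0 F hb.1 hc_mem]
      exact W0_congr F (memℒp_top_mul hb.1 hc_mem) h_bc x
    rw [map_sub reflect x (mul chiPlus (W0 F (fun t => c (-t)) (reflect x))),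
      reflect_chiPlus (W0 F (fun t => c (-t)) (reflect x)), hJy,
      reflect_chiPlus (W0 F c x), hJz,
      chiPlus_eq_sub (W0 F (fun t => c (-t)) (reflect x)),
      chiPlus_eq_sub (W0 F c x)]
    simp only [map_sub]
    rw [e1, e2]
    abel
  refine ContinuousLinearMap.ext fun φ => ?_
  apply Subtype.ext
  simp only [ContinuousLinearMap.comp_apply, ContinuousLinearMap.add_apply,
    ContinuousLinearMap.sub_apply, ContinuousLinearMap.one_apply, W, H, compress_coe,
    Submodule.coe_add, AddSubgroupClass.coe_sub]
  exact key (φ : L2)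

end WienerHopf
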